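/- arXiv:1106.2218 — 2 statements merged into one kernel-verified Lean document; each statement's English description precedes it below -/
import Mathlib

section
/- Let T be a category with (small) products in which idempotents split. Let L be a weakly reflective full subcategory of T that is closed under retracts, and assume that every pair of parallel arrows between objects of L has a weak equalizer that lies in L. Then L is reflective (the inclusion L → T has a left adjoint). -/
open CategoryTheory Category Limits Pretriangulated

universe v u

namespace Paper

section General

variable {T : Type u} [Category.{v} T]

/-- A full subcategory (given by its class of objects) is closed under retracts. -/
def ClosedUnderRetracts (S : Set T) : Prop :=
  ∀ ⦃A B : T⦄, A ∈ S → (∃ (i : B ⟶ A) (r : A ⟶ B), i ≫ r = 𝟙 B) → B ∈ S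

/-- A full subcategory is weakly reflective: every object admits a weak reflection into it. -/
def WeaklyReflective (S : Set T) : Prop :=
  ∀ X : T, ∃ (X' : T) (l : X ⟶ X'), X' ∈ S ∧
    ∀ ⦃Y : T⦄, Y ∈ S → ∀ f : X ⟶ Y, ∃ g : X' ⟶ Y, l ≫ g = f

/-- A full subcategory is weakly coreflective. -/
def WeaklyCoreflective (S : Set T) : Prop :=
  ∀ X : T, ∃ (X' : T) (c : X' ⟶ X), X' ∈ S ∧
    ∀ ⦃Y : T⦄, Y ∈ S → ∀ f : Y ⟶ X, ∃ g : Y ⟶ X', g ≫ c = f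

/-- A full subcategory is reflective: the inclusion has a left adjoint. -/
def ReflectiveSet (S : Set T) : Prop :=
  (ObjectProperty.ι (fun X => X ∈ S)).IsRightAdjoint

/-- A full subcategory is coreflective: the inclusion has a right adjoint. -/
def CoreflectiveSet (S : Set T) : Prop :=
  (ObjectProperty.ι (fun X => X ∈ S)).IsLeftAdjoint

end General

/-- The data of an endofunctor together with a natural transformation from the identity
(a candidate reflection with its unit). -/
structure ReflectionData (T : Type u) [Category.{v} T] where
  L : T ⥤ T
  unit : 𝟭 T ⟶ L

/-- The data of an endofunctor together with a natural transformation to the identity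
(a candidate coreflection with its counit). -/
structure CoreflectionData (T : Type u) [Category.{v} T] where
  C : T ⥤ T
  counit : C ⟶ 𝟭 T

section ReflData

variable {T : Type u} [Category.{v} T]

/-- The `L`-local objects: the essential image of `L`. -/
def ReflectionData.localObjects (R : ReflectionData T) : Set T := R.L.essImage

/-- `(L, l)` is a reflection: every morphism to an `L`-local object factors uniquely
through the unit. -/
def ReflectionData.IsReflection (R : ReflectionData T) : Prop :=
  ∀ ⦃X W : T⦄, W ∈ R.localObjects → ∀ f : X ⟶ W,
    ∃! g : R.L.obj X ⟶ W, R.unit.app X ≫ g = f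

/-- The `C`-colocal objects: the essential image of `C`. -/
def CoreflectionData.colocalObjects (Q : CoreflectionData T) : Set T := Q.C.essImage

/-- `(C, c)` is a coreflection: every morphism from a `C`-colocal object factors uniquely
through the counit. -/
def CoreflectionData.IsCoreflection (Q : CoreflectionData T) : Prop :=
  ∀ ⦃X W : T⦄, W ∈ Q.colocalObjects → ∀ f : W ⟶ X,
    ∃! g : W ⟶ Q.C.obj X, g ≫ Q.counit.app X = f

end ReflData

section Triangulated

variable {T : Type u} [Category.{v} T] [HasZeroObject T] [Preadditive T] [HasShift T ℤ]
  [∀ n : ℤ, (shiftFunctor T n).Additive] [Pretriangulated T]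

/-- Closed under fibres: the first vertex of a distinguished triangle whose second and third
vertices lie in `S` lies in `S`. -/
def ClosedUnderFibres (S : Set T) : Prop :=
  ∀ ⦃X Y Z : T⦄ (u : X ⟶ Y) (v : Y ⟶ Z) (w : Z ⟶ X⟦(1:ℤ)⟧),
    (Triangle.mk u v w ∈ distTriang T) → Y ∈ S → Z ∈ S → X ∈ S

/-- Closed under cofibres. -/
def ClosedUnderCofibres (S : Set T) : Prop :=
  ∀ ⦃X Y Z : T⦄ (u : X ⟶ Y) (v : Y ⟶ Z) (w : Z ⟶ X⟦(1:ℤ)⟧),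
    (Triangle.mk u v w ∈ distTriang T) → X ∈ S → Y ∈ S → Z ∈ S

/-- Closed under extensions. -/
def ClosedUnderExtensions (S : Set T) : Prop :=
  ∀ ⦃X Y Z : T⦄ (u : X ⟶ Y) (v : Y ⟶ Z) (w : Z ⟶ X⟦(1:ℤ)⟧),
    (Triangle.mk u v w ∈ distTriang T) → X ∈ S → Z ∈ S → Y ∈ S

/-- `^⊥D`: objects `X` with `T(X, ΣᵏD) = 0` for all `D ∈ D` and all integers `k`. -/
def leftOrth (D : Set T) : Set T :=
  {X | ∀ ⦃E : T⦄, E ∈ D → ∀ k : ℤ, ∀ f : X ⟶ E⟦k⟧, f = 0}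

/-- `D^⊥`: objects `Y` with `T(ΣᵏD, Y) = 0` for all `D ∈ D` and all integers `k`. -/
def rightOrth (D : Set T) : Set T :=
  {Y | ∀ ⦃E : T⦄, E ∈ D → ∀ k : ℤ, ∀ f : E⟦k⟧ ⟶ Y, f = 0}

/-- `⊾D`: objects `X` with `T(X, ΣᵏD) = 0` for all `D ∈ D` and all `k ≤ 0`. -/
def leftSemiOrth (D : Set T) : Set T :=
  {X | ∀ ⦃E : T⦄, E ∈ D → ∀ k : ℤ, k ≤ 0 → ∀ f : X ⟶ E⟦k⟧, f = 0}

/-- `D⊿`: objects `Y` with `T(ΣᵏD, Y) = 0` for all `D ∈ D` and all `k ≥ 0`. -/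
def rightSemiOrth (D : Set T) : Set T :=
  {Y | ∀ ⦃E : T⦄, E ∈ D → ∀ k : ℤ, 0 ≤ k → ∀ f : E⟦k⟧ ⟶ Y, f = 0}

section WithLimits

variable [HasProducts.{v} T] [HasCoproducts.{v} T]

/-- Closed under all (small) products. -/
def ClosedUnderProducts (S : Set T) : Prop :=
  ∀ ⦃ι : Type v⦄ (f : ι → T), (∀ i, f i ∈ S) → (∏ᶜ f) ∈ S

/-- Closed under all (small) coproducts. -/
def ClosedUnderCoproducts (S : Set T) : Prop :=
  ∀ ⦃ι : Type v⦄ (f : ι → T), (∀ i, f i ∈ S) → (∐ f) ∈ S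

/-- Semilocalizing: closed under coproducts, cofibres and extensions. -/
def IsSemilocalizing (S : Set T) : Prop :=
  ClosedUnderCoproducts S ∧ ClosedUnderCofibres S ∧ ClosedUnderExtensions S

/-- Semicolocalizing: closed under products, fibres and extensions. -/
def IsSemicolocalizing (S : Set T) : Prop :=
  ClosedUnderProducts S ∧ ClosedUnderFibres S ∧ ClosedUnderExtensions S

/-- Localizing: closed under coproducts, fibres, cofibres and extensions. -/
def IsLocalizing (S : Set T) : Prop :=
  ClosedUnderCoproducts S ∧ ClosedUnderFibres S ∧ ClosedUnderCofibres S ∧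
    ClosedUnderExtensions S

/-- Colocalizing: closed under products, fibres, cofibres and extensions. -/
def IsColocalizing (S : Set T) : Prop :=
  ClosedUnderProducts S ∧ ClosedUnderFibres S ∧ ClosedUnderCofibres S ∧
    ClosedUnderExtensions S

/-- The smallest semilocalizing subcategory containing `D`. -/
def semiloc (D : Set T) : Set T := ⋂₀ {S : Set T | IsSemilocalizing S ∧ D ⊆ S}

/-- The smallest semicolocalizing subcategory containing `D`. -/
def semicoloc (D : Set T) : Set T := ⋂₀ {S : Set T | IsSemicolocalizing S ∧ D ⊆ S}

/-- The smallest localizing subcategory containing `D`. -/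
def loc (D : Set T) : Set T := ⋂₀ {S : Set T | IsLocalizing S ∧ D ⊆ S}

/-- The smallest colocalizing subcategory containing `D`. -/
def coloc (D : Set T) : Set T := ⋂₀ {S : Set T | IsColocalizing S ∧ D ⊆ S}

end WithLimits

end Triangulated


/-- Let `T` be a category with products in which idempotents split. If `L` is a
weakly reflective full subcategory closed under retracts such that every pair of parallel
arrows between objects of `L` has a weak equalizer lying in `L`, then `L` is reflective. -/
theorem statement12 {T : Type u} [Category.{v} T] [HasProducts.{v} T]
    [IsIdempotentComplete T] (S : Set T)
    (hweak : WeaklyReflective S) (hretr : ClosedUnderRetracts S)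
    (hwe : ∀ ⦃A B : T⦄, A ∈ S → B ∈ S → ∀ f g : A ⟶ B,
        ∃ (E : T) (w : E ⟶ A), E ∈ S ∧ w ≫ f = w ≫ g ∧
          ∀ ⦃Y : T⦄ (h : Y ⟶ A), h ≫ f = h ≫ g → ∃ k : Y ⟶ E, k ≫ w = h) :
    ReflectiveSet S := by
  have key : ∀ X : T, ∃ (R : T) (u : X ⟶ R), R ∈ S ∧
      ∀ ⦃Y : T⦄, Y ∈ S → ∀ f : X ⟶ Y, ∃! g : R ⟶ Y, u ≫ g = f := by
    intro X
    obtain ⟨X', l, hX', hfact⟩ := hweak X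
    set M := {e : X' ⟶ X' // l ≫ e = l} with hM
    let P := ∏ᶜ (fun _ : M => X')
    let q : X' ⟶ P := Pi.lift (fun e => e.1)
    let d : X' ⟶ P := Pi.lift (fun _ => 𝟙 X')
    obtain ⟨P', p, hP', hPfact⟩ := hweak P
    obtain ⟨E, w, hE, hwe1, hwe2⟩ := hwe hX' hP' (q ≫ p) (d ≫ p)
    have hwid : ∀ e : M, w ≫ e.1 = w := by
      intro e
      obtain ⟨r, hr⟩ := hPfact hX' (Pi.π _ e)
      have h1 := congrArg (fun x => x ≫ r) hwe1
      simp only [Category.assoc] at h1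
      rw [hr] at h1
      simpa [q, d] using h1
    have hl : l ≫ q ≫ p = l ≫ d ≫ p := by
      have h2 : l ≫ q = l ≫ d := by
        apply Pi.hom_ext
        intro e
        simpa [q, d] using e.2
      rw [← Category.assoc, h2, Category.assoc]
    obtain ⟨m, hm⟩ := hwe2 l hl
    obtain ⟨s, hs⟩ := hfact hE m
    have hsw : w ≫ s ≫ w = w := hwid ⟨s ≫ w, by rw [← Category.assoc, hs, hm]⟩
    have hidem : (w ≫ s) ≫ (w ≫ s) = w ≫ s := by
      simp only [Category.assoc]
      rw [reassoc_of% hsw]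
    obtain ⟨R, ι, π, hιπ, hπι⟩ := IsIdempotentComplete.idempotents_split E (w ≫ s) hidem
    have hR : R ∈ S := hretr hE ⟨ι, π, hιπ⟩
    have hπι' := reassoc_of% hπι
    have hιπ' := reassoc_of% hιπ
    have hm' := reassoc_of% hm
    have hs' := reassoc_of% hs
    have hu : ∀ {Z : T} (x : E ⟶ Z), m ≫ π ≫ ι ≫ x = m ≫ x := by
      intro Z x
      rw [hπι', hm', hs']
    -- rigidity
    have rigid : ∀ h : R ⟶ R, (m ≫ π) ≫ h = m ≫ π → h = 𝟙 R := by
      intro h hh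
      simp only [Category.assoc] at hh
      have hh' := reassoc_of% hh
      have he : l ≫ (s ≫ π ≫ h ≫ ι ≫ w) = l := by
        rw [hs', hh', hπι']
        rw [hsw, hm]
      have hkey : w ≫ s ≫ π ≫ h ≫ ι ≫ w = w := hwid ⟨s ≫ π ≫ h ≫ ι ≫ w, he⟩
      have h3 : ι ≫ (w ≫ s ≫ π ≫ h ≫ ι ≫ w) ≫ s ≫ π = ι ≫ w ≫ s ≫ π := by rw [hkey]
      simp only [Category.assoc] at h3
      simp only [← hπι'] at h3
      simpa [hιπ', hιπ] using h3
    refine ⟨R, m ≫ π, hR, ?_⟩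
    intro Y hY f
    obtain ⟨t, ht⟩ := hfact hY f
    have hex : (m ≫ π) ≫ ι ≫ w ≫ t = f := by
      simp only [Category.assoc]
      rw [hu, hm', ht]
    refine ⟨ι ≫ w ≫ t, hex, ?_⟩
    intro g hg
    obtain ⟨E', v, hE'S, hv1, hv2⟩ := hwe hR hY g (ι ≫ w ≫ t)
    obtain ⟨k, hk⟩ := hv2 (m ≫ π) (by rw [hg, hex])
    obtain ⟨k', hk'⟩ := hfact hE'S k
    have hrig : ι ≫ w ≫ k' ≫ v = 𝟙 R := by
      apply rigid
      simp only [Category.assoc]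
      rw [hu, hm', ← Category.assoc, hk', hk]
    calc g = (ι ≫ w ≫ k' ≫ v) ≫ g := by rw [hrig, Category.id_comp]
      _ = ι ≫ w ≫ k' ≫ v ≫ g := by simp only [Category.assoc]
      _ = ι ≫ w ≫ k' ≫ v ≫ ι ≫ w ≫ t := by rw [hv1]
      _ = (ι ≫ w ≫ k' ≫ v) ≫ ι ≫ w ≫ t := by simp only [Category.assoc]
      _ = ι ≫ w ≫ t := by rw [hrig, Category.id_comp]
  -- build initial objects in structured arrow categories
  haveI : ∀ A : T, HasInitial (StructuredArrow A
      (ObjectProperty.ι (fun X => X ∈ S))) := by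
    intro A
    obtain ⟨R, u, hR, hu⟩ := key A
    have hinit : IsInitial
        (StructuredArrow.mk
          (show A ⟶ (ObjectProperty.ι (fun X => X ∈ S)).obj ⟨R, hR⟩ from u)) := by
      apply IsInitial.ofUniqueHom
        (fun Y => StructuredArrow.homMk (ObjectProperty.homMk (hu Y.right.2 Y.hom).choose)
          ((hu Y.right.2 Y.hom).choose_spec.1))
      intro Y mhom
      apply StructuredArrow.hom_ext
      apply ObjectProperty.hom_ext
      exact (hu Y.right.2 Y.hom).choose_spec.2 _ (StructuredArrow.w mhom)
    exact hinit.hasInitial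
  exact isRightAdjointOfStructuredArrowInitials _

end Paper
end

section
/- Every weakly reflective full subcategory that is closed under retracts and under fibres in a triangulated category with (small) products is reflective. -/
open CategoryTheory Category Limits Pretriangulated

universe v u

namespace Paper

section Statements

variable {T : Type u} [Category.{v} T] [HasZeroObject T] [Preadditive T] [HasShift T ℤ]
  [∀ n : ℤ, (shiftFunctor T n).Additive] [Pretriangulated T]
  [HasProducts.{v} T] [HasCoproducts.{v} T]

/-- Auxiliary recursion: solving `φ n - e ≫ φ (n+1) = χ n` for an idempotent `e`. -/
private lemma aux_seqSolve {Y G : T} (e : Y ⟶ Y) (he : e ≫ e = e) (χ : ℕ → (Y ⟶ G)) :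
    ∃ φ : ℕ → (Y ⟶ G), ∀ n, φ n - e ≫ φ (n + 1) = χ n := by
  let φ : ℕ → (Y ⟶ G) := fun n =>
    Nat.rec (χ 0) (fun n φn => (φn - χ n) + (χ (n + 1) - e ≫ χ (n + 1))) n
  have hφs : ∀ n, φ (n + 1) = (φ n - χ n) + (χ (n + 1) - e ≫ χ (n + 1)) := fun _ => rfl
  have inv : ∀ n, e ≫ (φ n - χ n) = φ n - χ n := by
    intro n
    induction n with
    | zero =>
      have : φ 0 - χ 0 = 0 := by simp [φ]
      rw [this]; simp
    | succ n ih =>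
      have h1 : φ (n + 1) - χ (n + 1) = (φ n - χ n) - e ≫ χ (n + 1) := by
        rw [hφs n]; abel
      rw [h1, Preadditive.comp_sub, ih, ← Category.assoc, he]
  have key : ∀ n, e ≫ φ (n + 1) = φ n - χ n := by
    intro n
    rw [hφs n, Preadditive.comp_add, inv n, Preadditive.comp_sub, ← Category.assoc, he]
    abel
  refine ⟨φ, fun n => by rw [key n]; abel⟩

/-- Bökstedt–Neeman: idempotents split in a pretriangulated category with countable
coproducts (proved via the telescope of the idempotent). -/
private lemma aux_idemSplits (Y : T) (e : Y ⟶ Y) (he : e ≫ e = e) :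
    ∃ (I : T) (p : Y ⟶ I) (s : I ⟶ Y), p ≫ s = e ∧ s ≫ p = 𝟙 I := by
  classical
  let fam : ULift.{v} ℕ → T := fun _ => Y
  let A : T := ∐ fam
  let ι : ℕ → (Y ⟶ A) := fun n => Sigma.ι fam (ULift.up n)
  let se : A ⟶ A := Sigma.desc (fun b => e ≫ ι (b.down + 1))
  let u : A ⟶ A := 𝟙 A - se
  have hι_se : ∀ n : ℕ, ι n ≫ se = e ≫ ι (n + 1) := fun n => Sigma.ι_desc _ _
  have hι_u : ∀ (n : ℕ) (G : T) (ψ : A ⟶ G),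
      ι n ≫ u ≫ ψ = ι n ≫ ψ - e ≫ ι (n + 1) ≫ ψ := by
    intro n G ψ
    have h1 : ι n ≫ u = ι n - e ≫ ι (n + 1) := by
      show ι n ≫ (𝟙 A - se) = _
      rw [Preadditive.comp_sub, Category.comp_id, hι_se n]
    rw [← Category.assoc, h1, Preadditive.sub_comp, Category.assoc]
  -- surjectivity of precomposition with u
  have usurj : ∀ (G : T) (χ : A ⟶ G), ∃ φ : A ⟶ G, u ≫ φ = χ := by
    intro G χ
    obtain ⟨φ, hφ⟩ := aux_seqSolve e he (fun n => ι n ≫ χ)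
    refine ⟨Sigma.desc (fun b => φ b.down), ?_⟩
    apply Sigma.hom_ext
    rintro ⟨n⟩
    have h1 : ι n ≫ Sigma.desc (fun b => φ b.down) = φ n := Sigma.ι_desc _ _
    have h2 : ι (n + 1) ≫ Sigma.desc (fun b => φ b.down) = φ (n + 1) := Sigma.ι_desc _ _
    show ι n ≫ u ≫ Sigma.desc (fun b => φ b.down) = ι n ≫ χ
    rw [hι_u, h1, h2]
    exact hφ n
  -- surjectivity of precomposition with u⟦1⟧'
  have usurj1 : ∀ (G : T) (χ : A⟦(1 : ℤ)⟧ ⟶ G), ∃ φ, u⟦(1 : ℤ)⟧' ≫ φ = χ := by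
    intro G χ
    let ε := (shiftFunctorCompIsoId T (-1 : ℤ) (1 : ℤ) (by ring)).app G
    obtain ⟨χ', hχ'⟩ := (shiftFunctor T (1 : ℤ)).map_surjective (χ ≫ ε.inv)
    obtain ⟨φ', hφ'⟩ := usurj _ χ'
    refine ⟨(shiftFunctor T (1 : ℤ)).map φ' ≫ ε.hom, ?_⟩
    rw [← Category.assoc, ← Functor.map_comp, hφ', hχ', Category.assoc, Iso.inv_hom_id,
      Category.comp_id]
  obtain ⟨Z, c, d, hT⟩ := distinguished_cocone_triangle u
  have huc : u ≫ c = 0 := comp_distTriang_mor_zero₁₂ _ hT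
  have hstep : ∀ n : ℕ, ι n ≫ c = e ≫ ι (n + 1) ≫ c := by
    intro n
    have := hι_u n Z c
    rw [huc, comp_zero] at this
    exact (sub_eq_zero.mp this.symm)
  have hconst : ∀ n : ℕ, ι n ≫ c = ι (n + 1) ≫ c := by
    intro n
    calc ι n ≫ c = e ≫ ι (n + 1) ≫ c := hstep n
      _ = e ≫ e ≫ ι (n + 1 + 1) ≫ c := by rw [hstep (n + 1)]
      _ = (e ≫ e) ≫ ι (n + 1 + 1) ≫ c := (Category.assoc _ _ _).symm
      _ = e ≫ ι (n + 1 + 1) ≫ c := by rw [he]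
      _ = ι (n + 1) ≫ c := (hstep (n + 1)).symm
  let α : Y ⟶ Z := ι 0 ≫ c
  have hall : ∀ n : ℕ, ι n ≫ c = α := by
    intro n
    induction n with
    | zero => rfl
    | succ n ih => rw [← hconst n, ih]
  have heα : e ≫ α = α := by
    have h0 := hstep 0
    rw [hall 1] at h0
    exact h0.symm
  -- the retraction
  let Fd : A ⟶ Y := Sigma.desc (fun _ => e)
  have huF : u ≫ Fd = 0 := by
    apply Sigma.hom_ext
    rintro ⟨n⟩
    show ι n ≫ u ≫ Fd = ι n ≫ 0
    rw [hι_u]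
    have h1 : ι n ≫ Fd = e := Sigma.ι_desc _ _
    have h2 : ι (n + 1) ≫ Fd = e := Sigma.ι_desc _ _
    rw [h1, h2, he, sub_self, comp_zero]
  obtain ⟨r₀, hr₀⟩ := Pretriangulated.Triangle.yoneda_exact₂ _ hT Fd huF
  let r : Z ⟶ Y := r₀
  have hr : Fd = c ≫ r := hr₀
  have hαr : α ≫ r = e := by
    have h1 : ι 0 ≫ Fd = e := Sigma.ι_desc _ _
    rw [← h1, hr, ← Category.assoc]
  have hinj : ∀ {G : T} (ψ : Z ⟶ G), α ≫ ψ = 0 → ψ = 0 := by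
    intro G ψ h0
    have hcψ : c ≫ ψ = 0 := by
      apply Sigma.hom_ext
      rintro ⟨n⟩
      show ι n ≫ c ≫ ψ = ι n ≫ 0
      rw [← Category.assoc, hall n, h0, comp_zero]
    obtain ⟨χ₀, hχ₀⟩ := Pretriangulated.Triangle.yoneda_exact₃ _ hT ψ hcψ
    let χ : A⟦(1 : ℤ)⟧ ⟶ G := χ₀
    have hχ : ψ = d ≫ χ := hχ₀
    obtain ⟨χ', hχ'⟩ := usurj1 G χ
    have hdu : d ≫ u⟦(1 : ℤ)⟧' = 0 := comp_distTriang_mor_zero₃₁ _ hT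
    rw [hχ, ← hχ', ← Category.assoc, hdu, zero_comp]
  have hrα : r ≫ α = 𝟙 Z := by
    have h0 : α ≫ (r ≫ α - 𝟙 Z) = 0 := by
      rw [Preadditive.comp_sub, Category.comp_id, ← Category.assoc, hαr, heα, sub_self]
    have := hinj _ h0
    have := sub_eq_zero.mp this
    exact this
  exact ⟨Z, α, r, hαr, hrα⟩

/-- Products of objects of a weakly reflective, retract-closed subcategory stay in it. -/
private lemma aux_prodMem (S : Set T) (hweak : WeaklyReflective S)
    (hretr : ClosedUnderRetracts S) {ι : Type v} (f : ι → T) (hf : ∀ i, f i ∈ S) :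
    (∏ᶜ f) ∈ S := by
  obtain ⟨P', lP, hP', hfact⟩ := hweak (∏ᶜ f)
  choose g hg using fun i => hfact (hf i) (Pi.π f i)
  refine hretr hP' ⟨lP, Pi.lift g, ?_⟩
  apply Pi.hom_ext
  intro i
  rw [Category.assoc, Pi.lift_π, hg i, Category.id_comp]

/-- The key construction: every object admits a genuine reflection into `S`. -/
private lemma aux_reflection (S : Set T) (hweak : WeaklyReflective S)
    (hretr : ClosedUnderRetracts S) (hfib : ClosedUnderFibres S) (X : T) :
    ∃ (I : T) (_ : I ∈ S) (η : X ⟶ I),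
      ∀ (W : T), W ∈ S → ∀ f : X ⟶ W, ∃! g : I ⟶ W, η ≫ g = f := by
  obtain ⟨X', l, hX', hl⟩ := hweak X
  -- Property (P): maps killed by l can be killed by an endomorphism fixing l
  have hP : ∀ (W : T), W ∈ S → ∀ h : X' ⟶ W, l ≫ h = 0 →
      ∃ e : X' ⟶ X', l ≫ e = l ∧ e ≫ h = 0 := by
    intro W hW h h0
    obtain ⟨Q, q, w, hT⟩ := distinguished_cocone_triangle₁ h
    have hQ : Q ∈ S := hfib q h w hT hX' hW
    obtain ⟨l', hl'₀⟩ := Pretriangulated.Triangle.coyoneda_exact₂ _ hT l h0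
    have hl' : l = l' ≫ q := hl'₀
    obtain ⟨t, ht⟩ := hl hQ l'
    refine ⟨t ≫ q, ?_, ?_⟩
    · rw [← Category.assoc, ht]; exact hl'.symm
    · have hqh : q ≫ h = 0 := comp_distTriang_mor_zero₁₂ _ hT
      rw [Category.assoc, hqh, comp_zero]
  -- the universal kill map e
  have hWbig : (∏ᶜ fun (_ : {j : X' ⟶ X' // l ≫ j = 0}) => X') ∈ S :=
    aux_prodMem S hweak hretr _ (fun _ => hX')
  obtain ⟨e, hle, heΦ⟩ := hP _ hWbig
      (Pi.lift (fun j => j.1))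
      (by
        apply Pi.hom_ext
        intro j
        rw [Category.assoc, Pi.lift_π, j.2, zero_comp])
  have hkillJ : ∀ j : X' ⟶ X', l ≫ j = 0 → e ≫ j = 0 := by
    intro j hj
    have h1 : (Pi.lift (fun j : {j : X' ⟶ X' // l ≫ j = 0} => j.1)) ≫
        Pi.π (fun _ => X') ⟨j, hj⟩ = j := Pi.lift_π _ _
    rw [← h1, ← Category.assoc, heΦ, zero_comp]
  have hkill : ∀ (W : T), W ∈ S → ∀ h : X' ⟶ W, l ≫ h = 0 → e ≫ h = 0 := by
    intro W hW h h0
    obtain ⟨e', hle', he'h⟩ := hP W hW h h0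
    have hj : l ≫ (𝟙 X' - e') = 0 := by
      rw [Preadditive.comp_sub, Category.comp_id, hle', sub_self]
    have h1 : e ≫ (𝟙 X' - e') = 0 := hkillJ _ hj
    have h2 : h = (𝟙 X' - e') ≫ h + e' ≫ h := by
      rw [Preadditive.sub_comp, Category.id_comp]; abel
    rw [h2, Preadditive.comp_add, ← Category.assoc, h1, zero_comp, ← Category.assoc,
      Category.assoc, he'h, comp_zero, add_zero]
  have hee : e ≫ e = e := by
    have h0 : l ≫ (𝟙 X' - e) = 0 := by
      rw [Preadditive.comp_sub, Category.comp_id, hle, sub_self]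
    have h1 := hkill X' hX' (𝟙 X' - e) h0
    rw [Preadditive.comp_sub, Category.comp_id] at h1
    exact (sub_eq_zero.mp h1).symm
  obtain ⟨I, p, s, hps, hsp⟩ := aux_idemSplits X' e hee
  have hI : I ∈ S := hretr hX' ⟨s, p, hsp⟩
  refine ⟨I, hI, l ≫ p, ?_⟩
  intro W hW f
  obtain ⟨g, hg⟩ := hl hW f
  have hexist : (l ≫ p) ≫ s ≫ g = f := by
    calc (l ≫ p) ≫ s ≫ g = l ≫ (p ≫ s) ≫ g := by simp only [Category.assoc]
      _ = (l ≫ e) ≫ g := by rw [hps, ← Category.assoc]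
      _ = f := by rw [hle, hg]
  refine ⟨s ≫ g, hexist, ?_⟩
  intro y hy
  have hdiff : (l ≫ p) ≫ (y - s ≫ g) = 0 := by
    rw [Preadditive.comp_sub, hy, hexist, sub_self]
  have h0 : l ≫ (p ≫ (y - s ≫ g)) = 0 := by
    rw [← Category.assoc]; exact hdiff
  have h1 : e ≫ p ≫ (y - s ≫ g) = 0 := hkill W hW _ h0
  have h2 : p ≫ (y - s ≫ g) = 0 := by
    have : p ≫ (y - s ≫ g) = e ≫ p ≫ (y - s ≫ g) := by
      rw [← hps, Category.assoc, ← Category.assoc s, hsp, Category.id_comp]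
    rw [this, h1]
  have h3 : y - s ≫ g = 0 := by
    have : y - s ≫ g = s ≫ p ≫ (y - s ≫ g) := by
      rw [← Category.assoc, hsp, Category.id_comp]
    rw [this, h2, comp_zero]
  exact sub_eq_zero.mp h3

/-- In a triangulated category with products, every weakly reflective full
subcategory closed under retracts and fibres is reflective. -/
theorem statement13 (S : Set T) (hweak : WeaklyReflective S)
    (hretr : ClosedUnderRetracts S) (hfib : ClosedUnderFibres S) :
    ReflectiveSet S := by
  have key := aux_reflection S hweak hretr hfib
  haveI : ∀ A : T, HasInitial (StructuredArrow A (ObjectProperty.ι (fun X => X ∈ S))) := by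
    intro A
    obtain ⟨I, hI, η, hη⟩ := key A
    refine IsInitial.hasInitial (X := StructuredArrow.mk
      (Y := (⟨I, hI⟩ : ObjectProperty.FullSubcategory (fun X => X ∈ S))) η) ?_
    refine IsInitial.ofUniqueHom
      (fun B => StructuredArrow.homMk (ObjectProperty.homMk (hη B.right.obj B.right.property B.hom).choose)
        (by simpa using (hη B.right.obj B.right.property B.hom).choose_spec.1)) ?_
    intro B m
    apply StructuredArrow.hom_ext
    apply ObjectProperty.hom_ext
    refine (hη B.right.obj B.right.property B.hom).choose_spec.2 m.right.hom ?_
    simpa using StructuredArrow.w m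
  exact (isRightAdjointOfStructuredArrowInitials _ : (ObjectProperty.ι (fun X => X ∈ S)).IsRightAdjoint)

end Statements

end Paper
end
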